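/- arXiv:2603.12405 — 3 statements merged into one kernel-verified Lean document; each statement's English description precedes it below -/
import Mathlib

section
/- The matrix U_d is unitary and satisfies (⟨0|⊗⟨0|⊗⟨0|⊗I_N) U_d (|0⟩⊗|0⟩⊗|0⟩⊗I_N) = L̃_d; that is, U_d is an exact (1, 3, 0)-block encoding of the scaled one-dimensional Dirichlet Laplacian L̃_d. -/
open Matrix
open scoped Kronecker

noncomputable section

instance instNeZeroPow2 (n : ℕ) : NeZero (2 ^ n) := ⟨pow_ne_zero n two_ne_zero⟩

/-- Cyclic left shift: `Sm • e_j = e_{j-1 mod N}`, i.e. `(Sm)_{i j} = [i = j - 1]`. -/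
def Sm (N : ℕ) [NeZero N] : Matrix (Fin N) (Fin N) ℂ :=
  Matrix.of fun i j => if i = j - 1 then 1 else 0

/-- Cyclic right shift: `Sp • e_j = e_{j+1 mod N}`. -/
def Sp (N : ℕ) [NeZero N] : Matrix (Fin N) (Fin N) ℂ :=
  Matrix.of fun i j => if i = j + 1 then 1 else 0

/-- The index `N - 1` of the last grid point. -/
def fLast (N : ℕ) [NeZero N] : Fin N := ⟨N - 1, Nat.sub_lt (Nat.pos_of_neZero N) Nat.one_pos⟩

def Hgate : Matrix (Fin 2) (Fin 2) ℂ := ((1 / Real.sqrt 2 : ℝ) : ℂ) • !![1, 1; 1, -1]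
def Zgate : Matrix (Fin 2) (Fin 2) ℂ := !![1, 0; 0, -1]
def Xgate : Matrix (Fin 2) (Fin 2) ℂ := !![0, 1; 1, 0]
def P0 : Matrix (Fin 2) (Fin 2) ℂ := !![1, 0; 0, 0]
def P1 : Matrix (Fin 2) (Fin 2) ℂ := !![0, 0; 0, 1]

/-- Controlled flip `F(Q) = X ⊗ Q + I₂ ⊗ (I − Q)` for a projector `Q`. -/
def Fctrl {α : Type*} [DecidableEq α] [Fintype α] (Q : Matrix α α ℂ) :
    Matrix (Fin 2 × α) (Fin 2 × α) ℂ :=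
  Xgate ⊗ₖ Q + (1 : Matrix (Fin 2) (Fin 2) ℂ) ⊗ₖ ((1 : Matrix α α ℂ) - Q)

/-- `C₋ = I₂ ⊗ (|0⟩⟨0| ⊗ I₂ ⊗ S⁻ + |1⟩⟨1| ⊗ I₂ ⊗ I_N)` on `del, ℓ₁, ℓ₀, j`. -/
def Cminus3 (N : ℕ) [NeZero N] :
    Matrix (Fin 2 × Fin 2 × Fin 2 × Fin N) (Fin 2 × Fin 2 × Fin 2 × Fin N) ℂ :=
  (1 : Matrix (Fin 2) (Fin 2) ℂ) ⊗ₖ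
    (P0 ⊗ₖ ((1 : Matrix (Fin 2) (Fin 2) ℂ) ⊗ₖ Sm N) +
     P1 ⊗ₖ ((1 : Matrix (Fin 2) (Fin 2) ℂ) ⊗ₖ (1 : Matrix (Fin N) (Fin N) ℂ)))

/-- `C₊ = I₂ ⊗ I₂ ⊗ (|1⟩⟨1| ⊗ S⁺ + |0⟩⟨0| ⊗ I_N)` on `del, ℓ₁, ℓ₀, j`. -/
def Cplus3 (N : ℕ) [NeZero N] :
    Matrix (Fin 2 × Fin 2 × Fin 2 × Fin N) (Fin 2 × Fin 2 × Fin 2 × Fin N) ℂ :=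
  (1 : Matrix (Fin 2) (Fin 2) ℂ) ⊗ₖ ((1 : Matrix (Fin 2) (Fin 2) ℂ) ⊗ₖ
    (P1 ⊗ₖ Sp N + P0 ⊗ₖ (1 : Matrix (Fin N) (Fin N) ℂ)))

/-- `B₀ = F(|0⟩⟨0| ⊗ |0⟩⟨0| ⊗ e₀e₀ᵀ)`. -/
def B00 (N : ℕ) [NeZero N] :
    Matrix (Fin 2 × Fin 2 × Fin 2 × Fin N) (Fin 2 × Fin 2 × Fin 2 × Fin N) ℂ :=
  Fctrl (P0 ⊗ₖ (P0 ⊗ₖ Matrix.single (0 : Fin N) (0 : Fin N) (1 : ℂ)))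

/-- `B₂ = F(|0⟩⟨0| ⊗ |1⟩⟨1| ⊗ e₀e₀ᵀ)`. -/
def B01 (N : ℕ) [NeZero N] :
    Matrix (Fin 2 × Fin 2 × Fin 2 × Fin N) (Fin 2 × Fin 2 × Fin 2 × Fin N) ℂ :=
  Fctrl (P0 ⊗ₖ (P1 ⊗ₖ Matrix.single (0 : Fin N) (0 : Fin N) (1 : ℂ)))

/-- `B_{N−1} = F(|1⟩⟨1| ⊗ |1⟩⟨1| ⊗ e_{N−1}e_{N−1}ᵀ)`. -/
def B11L (N : ℕ) [NeZero N] :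
    Matrix (Fin 2 × Fin 2 × Fin 2 × Fin N) (Fin 2 × Fin 2 × Fin 2 × Fin N) ℂ :=
  Fctrl (P1 ⊗ₖ (P1 ⊗ₖ Matrix.single (fLast N) (fLast N) (1 : ℂ)))

/-- `B₄ = F(|0⟩⟨0| ⊗ |1⟩⟨1| ⊗ e_{N−1}e_{N−1}ᵀ)`. -/
def B01L (N : ℕ) [NeZero N] :
    Matrix (Fin 2 × Fin 2 × Fin 2 × Fin N) (Fin 2 × Fin 2 × Fin 2 × Fin N) ℂ :=
  Fctrl (P0 ⊗ₖ (P1 ⊗ₖ Matrix.single (fLast N) (fLast N) (1 : ℂ)))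

/-- `I₂ ⊗ A ⊗ A ⊗ I_N` for a single-qubit gate `A`. -/
def sandwich (N : ℕ) [NeZero N] (A : Matrix (Fin 2) (Fin 2) ℂ) :
    Matrix (Fin 2 × Fin 2 × Fin 2 × Fin N) (Fin 2 × Fin 2 × Fin 2 × Fin N) ℂ :=
  (1 : Matrix (Fin 2) (Fin 2) ℂ) ⊗ₖ (A ⊗ₖ (A ⊗ₖ (1 : Matrix (Fin N) (Fin N) ℂ)))

/-- `U_d = (I₂⊗H⊗H⊗I) · C₊ · C₋ · B_{N−1} · B₀ · (I₂⊗Z⊗Z⊗I) · (I₂⊗H⊗H⊗I)`. -/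
def Ud (N : ℕ) [NeZero N] :
    Matrix (Fin 2 × Fin 2 × Fin 2 × Fin N) (Fin 2 × Fin 2 × Fin 2 × Fin N) ℂ :=
  sandwich N Hgate * Cplus3 N * Cminus3 N * B11L N * B00 N * sandwich N Zgate * sandwich N Hgate

/-- `U_n = (I₂⊗H⊗H⊗I) · C₊ · C₋ · B₄ · B₃ · B₂ · B₁ · (I₂⊗Z⊗Z⊗I) · (I₂⊗H⊗H⊗I)`. -/
def Un (N : ℕ) [NeZero N] :
    Matrix (Fin 2 × Fin 2 × Fin 2 × Fin N) (Fin 2 × Fin 2 × Fin 2 × Fin N) ℂ :=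
  sandwich N Hgate * Cplus3 N * Cminus3 N * B01L N * B11L N * B01 N * B00 N *
    sandwich N Zgate * sandwich N Hgate

/-- The scaled 1D periodic Laplacian `L̃_p = (1/4)(S⁻ + S⁺ − 2 I)`. -/
def Lper (N : ℕ) [NeZero N] : Matrix (Fin N) (Fin N) ℂ :=
  (1 / 4 : ℂ) • (Sm N + Sp N - (2 : ℂ) • (1 : Matrix (Fin N) (Fin N) ℂ))

/-- The scaled 1D Dirichlet Laplacian. -/
def Ldir (N : ℕ) [NeZero N] : Matrix (Fin N) (Fin N) ℂ :=
  Lper N - (1 / 4 : ℂ) •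
    (Matrix.single (0 : Fin N) (fLast N) (1 : ℂ) +
     Matrix.single (fLast N) (0 : Fin N) (1 : ℂ))


section AuxKron
variable {m n : Type*} [Fintype m] [Fintype n]

lemma kron_conjT (A : Matrix m m ℂ) (B : Matrix n n ℂ) : (A ⊗ₖ B)ᴴ = Aᴴ ⊗ₖ Bᴴ := by
  ext ⟨i, j⟩ ⟨k, l⟩
  simp [Matrix.conjTranspose_apply]

lemma kron_sub (A : Matrix m m ℂ) (B C : Matrix n n ℂ) :
    A ⊗ₖ (B - C) = A ⊗ₖ B - A ⊗ₖ C := by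
  ext ⟨i, j⟩ ⟨k, l⟩
  simp [mul_sub]

lemma sub_kron (A B : Matrix m m ℂ) (C : Matrix n n ℂ) :
    (A - B) ⊗ₖ C = A ⊗ₖ C - B ⊗ₖ C := by
  ext ⟨i, j⟩ ⟨k, l⟩
  simp [sub_mul]

end AuxKron

/-- The 2×2 matrix `H P₀ Z H`. -/
def G0 : Matrix (Fin 2) (Fin 2) ℂ := (1/2 : ℂ) • !![1, 1; 1, 1]
/-- The 2×2 matrix `H P₁ Z H`. -/
def G1 : Matrix (Fin 2) (Fin 2) ℂ := (1/2 : ℂ) • !![-1, 1; 1, -1]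

lemma hc2 : ((1 / Real.sqrt 2 : ℝ) : ℂ) * ((1 / Real.sqrt 2 : ℝ) : ℂ) = 1/2 := by
  have h : (1 / Real.sqrt 2) * (1 / Real.sqrt 2) = 1/2 := by
    rw [div_mul_div_comm, one_mul, Real.mul_self_sqrt (by norm_num : (0:ℝ) ≤ 2)]
  rw [← Complex.ofReal_mul, h]; norm_num

@[simp] lemma P0_mul_P0 : P0 * P0 = P0 := by
  ext i j; fin_cases i <;> fin_cases j <;> simp [P0, Matrix.mul_apply, Fin.sum_univ_two]
@[simp] lemma P0_mul_P1 : P0 * P1 = 0 := by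
  ext i j; fin_cases i <;> fin_cases j <;> simp [P0, P1, Matrix.mul_apply, Fin.sum_univ_two]
@[simp] lemma P1_mul_P0 : P1 * P0 = 0 := by
  ext i j; fin_cases i <;> fin_cases j <;> simp [P0, P1, Matrix.mul_apply, Fin.sum_univ_two]
@[simp] lemma P1_mul_P1 : P1 * P1 = P1 := by
  ext i j; fin_cases i <;> fin_cases j <;> simp [P1, Matrix.mul_apply, Fin.sum_univ_two]
lemma P0_add_P1 : P0 + P1 = 1 := by
  ext i j; fin_cases i <;> fin_cases j <;> simp [P0, P1, Matrix.one_apply]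
@[simp] lemma X_mul_X : Xgate * Xgate = 1 := by
  ext i j; fin_cases i <;> fin_cases j <;>
    simp [Xgate, Matrix.mul_apply, Fin.sum_univ_two, Matrix.one_apply]
@[simp] lemma Z_mul_Z : Zgate * Zgate = 1 := by
  ext i j; fin_cases i <;> fin_cases j <;>
    simp [Zgate, Matrix.mul_apply, Fin.sum_univ_two, Matrix.one_apply]
@[simp] lemma H_mul_H : Hgate * Hgate = 1 := by
  rw [Hgate, Matrix.smul_mul, Matrix.mul_smul, smul_smul, hc2]
  ext i j; fin_cases i <;> fin_cases j <;>
    simp [Matrix.mul_apply, Fin.sum_univ_two, Matrix.one_apply] <;> norm_num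

section MulAssocSimp
variable {x : Matrix (Fin 2) (Fin 2) ℂ}
@[simp] lemma P0_mul_P0' : P0 * (P0 * x) = P0 * x := by rw [← mul_assoc, P0_mul_P0]
@[simp] lemma P0_mul_P1' : P0 * (P1 * x) = 0 := by rw [← mul_assoc, P0_mul_P1, zero_mul]
@[simp] lemma P1_mul_P0' : P1 * (P0 * x) = 0 := by rw [← mul_assoc, P1_mul_P0, zero_mul]
@[simp] lemma P1_mul_P1' : P1 * (P1 * x) = P1 * x := by rw [← mul_assoc, P1_mul_P1]
@[simp] lemma X_mul_X' : Xgate * (Xgate * x) = x := by rw [← mul_assoc, X_mul_X, one_mul]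
end MulAssocSimp

@[simp] lemma P0_conjT : P0ᴴ = P0 := by
  ext i j; fin_cases i <;> fin_cases j <;> simp [P0]
@[simp] lemma P1_conjT : P1ᴴ = P1 := by
  ext i j; fin_cases i <;> fin_cases j <;> simp [P1]
@[simp] lemma X_conjT : Xgateᴴ = Xgate := by
  ext i j; fin_cases i <;> fin_cases j <;> simp [Xgate]
@[simp] lemma Z_conjT : Zgateᴴ = Zgate := by
  ext i j; fin_cases i <;> fin_cases j <;> simp [Zgate]
@[simp] lemma H_conjT : Hgateᴴ = Hgate := by
  ext i j; fin_cases i <;> fin_cases j <;> simp [Hgate, Matrix.conjTranspose_apply]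

lemma hG0 : Hgate * (P0 * (Zgate * Hgate)) = G0 := by
  rw [Hgate]
  simp only [Matrix.mul_smul, Matrix.smul_mul, smul_smul]
  rw [hc2, G0]
  congr 1
  ext i j; fin_cases i <;> fin_cases j <;>
    simp [Zgate, P0, Matrix.mul_apply, Fin.sum_univ_two]
lemma hG1 : Hgate * (P1 * (Zgate * Hgate)) = G1 := by
  rw [Hgate]
  simp only [Matrix.mul_smul, Matrix.smul_mul, smul_smul]
  rw [hc2, G1]
  congr 1
  ext i j; fin_cases i <;> fin_cases j <;>
    simp [Zgate, P1, Matrix.mul_apply, Fin.sum_univ_two]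

@[simp] lemma G0_00 : G0 0 0 = 1/2 := by simp [G0]
@[simp] lemma G1_00 : G1 0 0 = -(1/2) := by norm_num [G1]
@[simp] lemma X_00 : Xgate 0 0 = 0 := by simp [Xgate]

lemma H_mem : Hgate ∈ Matrix.unitaryGroup (Fin 2) ℂ := by
  rw [Matrix.mem_unitaryGroup_iff, Matrix.star_eq_conjTranspose, H_conjT, H_mul_H]
lemma Z_mem : Zgate ∈ Matrix.unitaryGroup (Fin 2) ℂ := by
  rw [Matrix.mem_unitaryGroup_iff, Matrix.star_eq_conjTranspose, Z_conjT, Z_mul_Z]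

section ShiftLemmas
variable {N : ℕ} [NeZero N]

lemma sp_mul_sm : Sp N * Sm N = 1 := by
  ext i j
  rw [Matrix.mul_apply, Finset.sum_eq_single (j - 1)]
  · simp [Sp, Sm, Matrix.one_apply, sub_add_cancel]
  · intro k _ hk; simp [Sm, hk]
  · simp

lemma sm_mul_sp : Sm N * Sp N = 1 := by
  ext i j
  rw [Matrix.mul_apply, Finset.sum_eq_single (j + 1)]
  · simp [Sp, Sm, Matrix.one_apply, add_sub_cancel_right]
  · intro k _ hk; simp [Sp, hk]
  · simp

lemma sp_mul_sm' (x : Matrix (Fin N) (Fin N) ℂ) : Sp N * (Sm N * x) = x := by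
  rw [← mul_assoc, sp_mul_sm, one_mul]
lemma sm_mul_sp' (x : Matrix (Fin N) (Fin N) ℂ) : Sm N * (Sp N * x) = x := by
  rw [← mul_assoc, sm_mul_sp, one_mul]

lemma sm_conjT : (Sm N)ᴴ = Sp N := by
  ext i j
  have h : (j = i - 1) ↔ (i = j + 1) := by
    constructor <;> intro h <;> subst h <;> simp
  simp [Sm, Sp, Matrix.conjTranspose_apply, h]

lemma sm_mem : Sm N ∈ Matrix.unitaryGroup (Fin N) ℂ := by
  rw [Matrix.mem_unitaryGroup_iff, Matrix.star_eq_conjTranspose, sm_conjT, sm_mul_sp]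

lemma sp_conjT : (Sp N)ᴴ = Sm N := by
  rw [← sm_conjT, Matrix.conjTranspose_conjTranspose]

lemma sp_mem : Sp N ∈ Matrix.unitaryGroup (Fin N) ℂ := by
  rw [Matrix.mem_unitaryGroup_iff, Matrix.star_eq_conjTranspose, sp_conjT, sp_mul_sm]

lemma flast_add_one (hN : 1 < N) : fLast N + 1 = 0 := by
  apply Fin.ext
  rw [Fin.add_def]
  simp only [fLast, Fin.val_one', Nat.mod_eq_of_lt hN, Fin.val_zero]
  rw [Nat.sub_add_cancel (by omega), Nat.mod_self]

lemma zero_sub_one (hN : 1 < N) : (0 : Fin N) - 1 = fLast N := by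
  rw [eq_comm, eq_sub_iff_add_eq]
  exact flast_add_one hN

lemma sm_mul_e00 (hN : 1 < N) :
    Sm N * Matrix.single (0 : Fin N) (0 : Fin N) (1 : ℂ) =
      Matrix.single (fLast N) (0 : Fin N) (1 : ℂ) := by
  ext i j
  rw [Matrix.mul_apply, Finset.sum_eq_single (0 : Fin N)]
  · simp [Sm, Matrix.single, zero_sub_one hN, eq_comm, and_comm]
    split <;> split <;> simp_all
  · intro k _ hk; simp [Matrix.single, Ne.symm hk]
  · simp

lemma sp_mul_eLL (hN : 1 < N) :
    Sp N * Matrix.single (fLast N) (fLast N) (1 : ℂ) =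
      Matrix.single (0 : Fin N) (fLast N) (1 : ℂ) := by
  ext i j
  rw [Matrix.mul_apply, Finset.sum_eq_single (fLast N)]
  · simp [Sp, Matrix.single, flast_add_one hN, eq_comm, and_comm]
    split <;> split <;> simp_all
  · intro k _ hk; simp [Matrix.single, Ne.symm hk]
  · simp

lemma e_idem (a : Fin N) :
    Matrix.single a a (1 : ℂ) * Matrix.single a a (1 : ℂ) =
      Matrix.single a a (1 : ℂ) := by
  rw [Matrix.single_mul_single_same, one_mul]

lemma e_conjT (a : Fin N) :
    (Matrix.single a a (1 : ℂ))ᴴ = Matrix.single a a (1 : ℂ) := by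
  ext i j
  simp [Matrix.conjTranspose_apply, Matrix.single, and_comm]

end ShiftLemmas

section Structural
variable {α : Type*} [DecidableEq α] [Fintype α]

lemma kron_mem {m n : Type*} [Fintype m] [DecidableEq m] [Fintype n] [DecidableEq n]
    {A : Matrix m m ℂ} {B : Matrix n n ℂ}
    (hA : A ∈ Matrix.unitaryGroup m ℂ) (hB : B ∈ Matrix.unitaryGroup n ℂ) :
    A ⊗ₖ B ∈ Matrix.unitaryGroup (m × n) ℂ := by
  rw [Matrix.mem_unitaryGroup_iff] at hA hB ⊢
  rw [Matrix.star_eq_conjTranspose] at hA hB ⊢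
  rw [kron_conjT, ← Matrix.mul_kronecker_mul, hA, hB, Matrix.one_kronecker_one]

lemma ctrl_mem {A B : Matrix α α ℂ}
    (hA : A ∈ Matrix.unitaryGroup α ℂ) (hB : B ∈ Matrix.unitaryGroup α ℂ) :
    P0 ⊗ₖ A + P1 ⊗ₖ B ∈ Matrix.unitaryGroup (Fin 2 × α) ℂ := by
  rw [Matrix.mem_unitaryGroup_iff] at hA hB ⊢
  rw [Matrix.star_eq_conjTranspose] at hA hB ⊢
  rw [Matrix.conjTranspose_add, kron_conjT, kron_conjT, P0_conjT, P1_conjT,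
    add_mul, mul_add, mul_add, ← Matrix.mul_kronecker_mul, ← Matrix.mul_kronecker_mul,
    ← Matrix.mul_kronecker_mul, ← Matrix.mul_kronecker_mul, hA, hB,
    P0_mul_P0, P0_mul_P1, P1_mul_P0, P1_mul_P1, Matrix.zero_kronecker,
    Matrix.zero_kronecker, add_zero, zero_add, ← Matrix.add_kronecker, P0_add_P1,
    Matrix.one_kronecker_one]

lemma Fctrl_conjT {Q : Matrix α α ℂ} (hQ : Qᴴ = Q) : (Fctrl Q)ᴴ = Fctrl Q := by
  rw [Fctrl, Matrix.conjTranspose_add, kron_conjT, kron_conjT, X_conjT,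
    Matrix.conjTranspose_one, Matrix.conjTranspose_sub, Matrix.conjTranspose_one, hQ]

lemma Fctrl_mem {Q : Matrix α α ℂ} (hQ : Qᴴ = Q) (hQ2 : Q * Q = Q) :
    Fctrl Q ∈ Matrix.unitaryGroup (Fin 2 × α) ℂ := by
  rw [Matrix.mem_unitaryGroup_iff, Matrix.star_eq_conjTranspose, Fctrl_conjT hQ]
  have h1 : Q * (1 - Q) = 0 := by rw [mul_sub, mul_one, hQ2, sub_self]
  have h2 : (1 - Q) * Q = 0 := by rw [sub_mul, one_mul, hQ2, sub_self]
  have h3 : (1 - Q) * (1 - Q) = 1 - Q := by rw [sub_mul, one_mul, h1, sub_zero]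
  have h4 : Q + (1 - Q) = (1 : Matrix α α ℂ) := by abel
  rw [Fctrl, add_mul, mul_add, mul_add, ← Matrix.mul_kronecker_mul,
    ← Matrix.mul_kronecker_mul,
    ← Matrix.mul_kronecker_mul, ← Matrix.mul_kronecker_mul, X_mul_X, h1, h2, h3, hQ2]
  simp only [Matrix.one_mul, Matrix.mul_one, Matrix.kronecker_zero, add_zero, zero_add]
  rw [← Matrix.kronecker_add, h4, Matrix.one_kronecker_one]

end Structural


lemma ud_closed (N : ℕ) [NeZero N] (hN : 1 < N) :
    Ud N =
      Xgate ⊗ₖ (G0 ⊗ₖ (G0 ⊗ₖ Matrix.single (fLast N) (0 : Fin N) (1 : ℂ))) +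
      Xgate ⊗ₖ (G1 ⊗ₖ (G1 ⊗ₖ Matrix.single (0 : Fin N) (fLast N) (1 : ℂ))) +
      (1 : Matrix (Fin 2) (Fin 2) ℂ) ⊗ₖ (G0 ⊗ₖ (G1 ⊗ₖ (1 : Matrix (Fin N) (Fin N) ℂ))) +
      (1 : Matrix (Fin 2) (Fin 2) ℂ) ⊗ₖ (G0 ⊗ₖ (G0 ⊗ₖ Sm N)) +
      (1 : Matrix (Fin 2) (Fin 2) ℂ) ⊗ₖ (G1 ⊗ₖ (G1 ⊗ₖ Sp N)) +
      (1 : Matrix (Fin 2) (Fin 2) ℂ) ⊗ₖ (G1 ⊗ₖ (G0 ⊗ₖ (1 : Matrix (Fin N) (Fin N) ℂ))) -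
      (1 : Matrix (Fin 2) (Fin 2) ℂ) ⊗ₖ
        (G0 ⊗ₖ (G0 ⊗ₖ Matrix.single (fLast N) (0 : Fin N) (1 : ℂ))) -
      (1 : Matrix (Fin 2) (Fin 2) ℂ) ⊗ₖ
        (G1 ⊗ₖ (G1 ⊗ₖ Matrix.single (0 : Fin N) (fLast N) (1 : ℂ))) := by
  have he0 : ∀ x : Matrix (Fin N) (Fin N) ℂ,
      Sm N * (Matrix.single (0 : Fin N) (0 : Fin N) (1 : ℂ) * x) =
        Matrix.single (fLast N) (0 : Fin N) (1 : ℂ) * x := fun x => by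
    rw [← mul_assoc, sm_mul_e00 hN]
  have heL : ∀ x : Matrix (Fin N) (Fin N) ℂ,
      Sp N * (Matrix.single (fLast N) (fLast N) (1 : ℂ) * x) =
        Matrix.single (0 : Fin N) (fLast N) (1 : ℂ) * x := fun x => by
    rw [← mul_assoc, sp_mul_eLL hN]
  unfold Ud sandwich Cplus3 Cminus3 B11L B00 Fctrl
  simp only [mul_add, add_mul, mul_sub, sub_mul, ← Matrix.mul_kronecker_mul,
    Matrix.kronecker_add, Matrix.add_kronecker, kron_sub, sub_kron,
    Matrix.kronecker_zero, Matrix.zero_kronecker, mul_assoc, one_mul, mul_one,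
    Matrix.one_mul, Matrix.mul_one, P0_mul_P0, P0_mul_P1, P1_mul_P0, P1_mul_P1,
    P0_mul_P0', P0_mul_P1', P1_mul_P0', P1_mul_P1', X_mul_X, X_mul_X',
    sp_mul_sm, sm_mul_sp, sp_mul_sm', sm_mul_sp', sm_mul_e00 hN, sp_mul_eLL hN,
    he0, heL, hG0, hG1, zero_mul, mul_zero, add_zero, zero_add, sub_zero, zero_sub,
    Matrix.one_kronecker_one]
  abel

/-- `U_d` is unitary and is an exact (1,3,0)-block encoding of the scaled 1D Dirichlet
Laplacian: `(⟨0|⊗⟨0|⊗⟨0|⊗I) U_d (|0⟩⊗|0⟩⊗|0⟩⊗I) = L̃_d`. -/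
theorem ud_block_encodes_dirichlet_laplacian (n : ℕ) (hn : 1 ≤ n) :
    Ud (2 ^ n) ∈ Matrix.unitaryGroup (Fin 2 × Fin 2 × Fin 2 × Fin (2 ^ n)) ℂ ∧
    (Ud (2 ^ n)).submatrix
        (fun i : Fin (2 ^ n) => ((0 : Fin 2), (0 : Fin 2), (0 : Fin 2), i))
        (fun j : Fin (2 ^ n) => ((0 : Fin 2), (0 : Fin 2), (0 : Fin 2), j))
      = Ldir (2 ^ n) := by
  have hN : 1 < 2 ^ n := Nat.one_lt_two_pow_iff.mpr (by omega)
  set N := 2 ^ n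
  constructor
  · have hsH : sandwich N Hgate ∈
        Matrix.unitaryGroup (Fin 2 × Fin 2 × Fin 2 × Fin N) ℂ := by
      unfold sandwich
      exact kron_mem (one_mem _) (kron_mem H_mem (kron_mem H_mem (one_mem _)))
    have hsZ : sandwich N Zgate ∈
        Matrix.unitaryGroup (Fin 2 × Fin 2 × Fin 2 × Fin N) ℂ := by
      unfold sandwich
      exact kron_mem (one_mem _) (kron_mem Z_mem (kron_mem Z_mem (one_mem _)))
    have hCp : Cplus3 N ∈ Matrix.unitaryGroup (Fin 2 × Fin 2 × Fin 2 × Fin N) ℂ := by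
      rw [Cplus3, add_comm (P1 ⊗ₖ Sp N)]
      exact kron_mem (one_mem _) (kron_mem (one_mem _) (ctrl_mem (one_mem _) sp_mem))
    have hCm : Cminus3 N ∈ Matrix.unitaryGroup (Fin 2 × Fin 2 × Fin 2 × Fin N) ℂ := by
      rw [Cminus3]
      exact kron_mem (one_mem _)
        (ctrl_mem (kron_mem (one_mem _) sm_mem) (kron_mem (one_mem _) (one_mem _)))
    have hB11 : B11L N ∈ Matrix.unitaryGroup (Fin 2 × Fin 2 × Fin 2 × Fin N) ℂ := by
      rw [B11L]
      refine Fctrl_mem ?_ ?_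
      · rw [kron_conjT, kron_conjT, P1_conjT, e_conjT]
      · rw [← Matrix.mul_kronecker_mul, ← Matrix.mul_kronecker_mul, P1_mul_P1, e_idem]
    have hB00 : B00 N ∈ Matrix.unitaryGroup (Fin 2 × Fin 2 × Fin 2 × Fin N) ℂ := by
      rw [B00]
      refine Fctrl_mem ?_ ?_
      · rw [kron_conjT, kron_conjT, P0_conjT, e_conjT]
      · rw [← Matrix.mul_kronecker_mul, ← Matrix.mul_kronecker_mul, P0_mul_P0, e_idem]
    rw [Ud]
    exact mul_mem (mul_mem (mul_mem (mul_mem (mul_mem (mul_mem hsH hCp) hCm) hB11) hB00)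
      hsZ) hsH
  · rw [ud_closed N hN]
    ext i j
    simp only [Matrix.submatrix_apply, Matrix.add_apply, Matrix.sub_apply,
      Matrix.kroneckerMap_apply, X_00, zero_mul, G0_00, G1_00, Matrix.one_apply_eq,
      one_mul, Ldir, Lper, Matrix.smul_apply, smul_eq_mul, Matrix.sub_apply,
      Matrix.add_apply]
    ring
end
end

section
/- Let M ≥ 1, m ≥ 0, D ≥ 1, and K = 2^{⌈log₂ D⌉} with standard basis f_1, …, f_K of ℂ^K. For d = 1, …, D let A_d be an M×M matrix and let V_d be a unitary on ℂ^{2^m} ⊗ ℂ^M that is a (1, m, 0)-block encoding of A_d. Let ω_1, …, ω_D ≥ 0 with Σ_{d=1}^D ω_d = 1, and let W be any K×K unitary with W f_1 = Σ_{d=1}^D √ω_d f_d. Define SEL = Σ_{d=1}^D f_d f_d^* ⊗ V_d + Σ_{d=D+1}^K f_d f_d^* ⊗ I_{2^m M}. Then U = (W^† ⊗ I_{2^m M}) · SEL · (W ⊗ I_{2^m M}) is unitary and satisfies (f_1^* ⊗ ⟨0|^{⊗m} ⊗ I_M) U (f_1 ⊗ |0⟩^{⊗m} ⊗ I_M) =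 Σ_{d=1}^D ω_d A_d; that is, U is an exact (1, m + log₂ K, 0)-block encoding of Σ_{d=1}^D ω_d A_d. -/
open Matrix
open scoped Kronecker

noncomputable section

/-- The select operator
`SEL = Σ_{d<D} f_d f_d^* ⊗ V_d + Σ_{D ≤ d < K} f_d f_d^* ⊗ I`. -/
def SEL {K : ℕ} {β : Type*} [Fintype β] [DecidableEq β] (D : ℕ) (hDK : D ≤ K)
    (V : Fin D → Matrix β β ℂ) : Matrix (Fin K × β) (Fin K × β) ℂ :=
  (∑ d : Fin D,
      Matrix.single (Fin.castLE hDK d) (Fin.castLE hDK d) (1 : ℂ) ⊗ₖ V d) +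
  ∑ k ∈ Finset.univ.filter fun k : Fin K => D ≤ (k : ℕ),
      Matrix.single k k (1 : ℂ) ⊗ₖ (1 : Matrix β β ℂ)

/-- `U = (W† ⊗ I) · SEL · (W ⊗ I)`. -/
def lcuU {K : ℕ} {β : Type*} [Fintype β] [DecidableEq β] (D : ℕ) (hDK : D ≤ K)
    (V : Fin D → Matrix β β ℂ) (W : Matrix (Fin K) (Fin K) ℂ) :
    Matrix (Fin K × β) (Fin K × β) ℂ :=
  (Wᴴ ⊗ₖ (1 : Matrix β β ℂ)) * SEL D hDK V * (W ⊗ₖ (1 : Matrix β β ℂ))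

lemma SEL_apply {K : ℕ} {β : Type*} [Fintype β] [DecidableEq β] (D : ℕ) (hDK : D ≤ K)
    (V : Fin D → Matrix β β ℂ) (k k' : Fin K) (x y : β) :
    SEL D hDK V (k, x) (k', y) =
      if k = k' then
        (if h : (k : ℕ) < D then V ⟨k, h⟩ x y else (1 : Matrix β β ℂ) x y) else 0 := by
  classical
  simp only [SEL, Matrix.add_apply, Matrix.sum_apply, Matrix.kroneckerMap_apply,
    Matrix.single, Matrix.of_apply]
  by_cases hkk : k = k'
  · subst hkk
    rw [if_pos rfl]
    by_cases h : (k : ℕ) < D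
    · rw [dif_pos h]
      have h2 : ∑ b ∈ Finset.univ.filter fun b : Fin K => D ≤ (b : ℕ),
          (if b = k ∧ b = k then (1:ℂ) else 0) * (1 : Matrix β β ℂ) x y = 0 := by
        apply Finset.sum_eq_zero
        intro b hb
        simp only [Finset.mem_filter, Finset.mem_univ, true_and] at hb
        have : ¬ b = k := fun hbk => by subst hbk; omega
        simp [this]
      rw [h2, add_zero]
      have hc : ∀ d : Fin D, (Fin.castLE hDK d = k) = (d = ⟨(k:ℕ), h⟩) := by
        intro d; simp [Fin.ext_iff]
      simp only [and_self, hc, ite_mul, one_mul, zero_mul]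
      simp [Finset.sum_ite_eq']
    · rw [dif_neg h]
      have h1 : ∑ d : Fin D,
          (if Fin.castLE hDK d = k ∧ Fin.castLE hDK d = k then (1:ℂ) else 0) * V d x y = 0 := by
        apply Finset.sum_eq_zero
        intro d _
        have : ¬ Fin.castLE hDK d = k := by
          intro hdk; rw [Fin.ext_iff] at hdk; simp at hdk; omega
        simp [this]
      rw [h1, zero_add]
      rw [Finset.sum_eq_single_of_mem k]
      · simp
      · simp; omega
      · intro b _ hbk; simp [hbk]
  · rw [if_neg hkk]
    rw [Finset.sum_eq_zero, Finset.sum_eq_zero, add_zero]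
    · intro b hb
      have : ¬ (b = k ∧ b = k') := by rintro ⟨rfl, rfl⟩; exact hkk rfl
      simp only [this, if_false, zero_mul]
    · intro d _
      have : ¬ (Fin.castLE hDK d = k ∧ Fin.castLE hDK d = k') := by
        rintro ⟨rfl, h2⟩; exact hkk h2
      simp only [this, if_false, zero_mul]

lemma SEL_mem {K : ℕ} {β : Type*} [Fintype β] [DecidableEq β] (D : ℕ) (hDK : D ≤ K)
    (V : Fin D → Matrix β β ℂ) (hVU : ∀ d, V d ∈ Matrix.unitaryGroup β ℂ) :
    SEL D hDK V ∈ Matrix.unitaryGroup (Fin K × β) ℂ := by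
  classical
  rw [Matrix.mem_unitaryGroup_iff']
  ext ⟨k, x⟩ ⟨k', y⟩
  rw [Matrix.mul_apply, Fintype.sum_prod_type]
  simp only [Matrix.star_apply, SEL_apply]
  rw [Finset.sum_eq_single k]
  · by_cases hkk : k = k'
    · subst hkk
      simp only [if_pos rfl]
      by_cases h : (k : ℕ) < D
      · simp only [dif_pos h]
        have := (Matrix.mem_unitaryGroup_iff').mp (hVU ⟨(k : ℕ), h⟩)
        have h2 := congrFun (congrFun this x) y
        rw [Matrix.mul_apply] at h2
        simp only [Matrix.star_apply] at h2
        simp only [if_pos trivial, ite_true]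
        rw [h2]
        simp [Matrix.one_apply, Prod.ext_iff]
      · simp only [dif_neg h]
        simp only [if_pos trivial, ite_true]
        have he : ∑ z : β, star ((1 : Matrix β β ℂ) z x) * (1 : Matrix β β ℂ) z y
            = if x = y then (1 : ℂ) else 0 := by
          rw [Finset.sum_eq_single x]
          · simp [Matrix.one_apply]
          · intro b _ hbx; simp [Matrix.one_apply, hbx]
          · simp
        rw [he]
        simp [Matrix.one_apply, Prod.ext_iff]
    · simp only [if_neg hkk]
      simp [Matrix.one_apply, Prod.ext_iff, hkk]
  · intro b _ hbk
    simp [if_neg hbk]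
  · simp

lemma kron_one_conjTranspose {K : ℕ} {β : Type*} [Fintype β] [DecidableEq β]
    (W : Matrix (Fin K) (Fin K) ℂ) :
    (W ⊗ₖ (1 : Matrix β β ℂ))ᴴ = Wᴴ ⊗ₖ (1 : Matrix β β ℂ) := by
  ext ⟨i, x⟩ ⟨j, y⟩
  simp [Matrix.conjTranspose_apply, Matrix.kroneckerMap_apply, Matrix.one_apply, apply_ite]
  by_cases hxy : x = y
  · simp [hxy]
  · simp only [hxy, if_false]
    intro h; exact absurd h.symm hxy

lemma kron_one_mem {K : ℕ} {β : Type*} [Fintype β] [DecidableEq β]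
    (W : Matrix (Fin K) (Fin K) ℂ) (hWU : W ∈ Matrix.unitaryGroup (Fin K) ℂ) :
    W ⊗ₖ (1 : Matrix β β ℂ) ∈ Matrix.unitaryGroup (Fin K × β) ℂ := by
  rw [Matrix.mem_unitaryGroup_iff]
  have h1 : W * Wᴴ = 1 := by
    have := Matrix.mem_unitaryGroup_iff.mp hWU
    rwa [Matrix.star_eq_conjTranspose] at this
  rw [Matrix.star_eq_conjTranspose, kron_one_conjTranspose, ← Matrix.mul_kronecker_mul,
    h1, one_mul, Matrix.one_kronecker_one]

lemma lcuU_mem {K : ℕ} {β : Type*} [Fintype β] [DecidableEq β] (D : ℕ) (hDK : D ≤ K)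
    (V : Fin D → Matrix β β ℂ) (hVU : ∀ d, V d ∈ Matrix.unitaryGroup β ℂ)
    (W : Matrix (Fin K) (Fin K) ℂ) (hWU : W ∈ Matrix.unitaryGroup (Fin K) ℂ) :
    lcuU D hDK V W ∈ Matrix.unitaryGroup (Fin K × β) ℂ := by
  have h1 : Wᴴ ⊗ₖ (1 : Matrix β β ℂ) = star (W ⊗ₖ (1 : Matrix β β ℂ)) := by
    rw [Matrix.star_eq_conjTranspose, kron_one_conjTranspose]
  rw [lcuU, h1]
  exact mul_mem (mul_mem (Unitary.star_mem (kron_one_mem W hWU)) (SEL_mem D hDK V hVU))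
    (kron_one_mem W hWU)

lemma lcuU_apply00 {K : ℕ} {β : Type*} [Fintype β] [DecidableEq β] [NeZero K] (D : ℕ)
    (hDK : D ≤ K) (V : Fin D → Matrix β β ℂ) (W : Matrix (Fin K) (Fin K) ℂ) (x y : β) :
    lcuU D hDK V W ((0 : Fin K), x) ((0 : Fin K), y)
      = ∑ k : Fin K, (starRingEnd ℂ) (W k 0) * W k 0 *
          (if h : (k : ℕ) < D then V ⟨k, h⟩ x y else (1 : Matrix β β ℂ) x y) := by
  simp only [lcuU, Matrix.mul_apply, Fintype.sum_prod_type, Matrix.kroneckerMap_apply,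
    Matrix.conjTranspose_apply, Matrix.one_apply, SEL_apply, ite_mul, mul_ite, mul_zero,
    zero_mul, mul_one, one_mul, Finset.sum_ite_eq, Finset.sum_ite_eq', Finset.mem_univ, if_true]
  refine Finset.sum_congr rfl fun k _ => ?_
  simp only [Complex.star_def]
  ring

/-- Linear combination of block encodings: given `(1, m, 0)`-block encodings `V_d` of `A_d`,
weights `ω_d ≥ 0` summing to one, and a unitary `W` with `W f₁ = Σ_d √ω_d f_d` on
`K = 2^{⌈log₂ D⌉}` dimensions, the unitary `U = (W† ⊗ I) · SEL · (W ⊗ I)` is an exact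
`(1, m + log₂ K, 0)`-block encoding of `Σ_d ω_d A_d`. -/
theorem lcu_block_encoding (M : ℕ) (hM : 1 ≤ M) (m : ℕ) (D : ℕ) (hD : 1 ≤ D)
    (A : Fin D → Matrix (Fin M) (Fin M) ℂ)
    (V : Fin D → Matrix (Fin (2 ^ m) × Fin M) (Fin (2 ^ m) × Fin M) ℂ)
    (hVU : ∀ d, V d ∈ Matrix.unitaryGroup (Fin (2 ^ m) × Fin M) ℂ)
    (hVbe : ∀ d, (V d).submatrix (fun i : Fin M => ((0 : Fin (2 ^ m)), i))
        (fun j : Fin M => ((0 : Fin (2 ^ m)), j)) = A d)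
    (ω : Fin D → ℝ) (hω0 : ∀ d, 0 ≤ ω d) (hω1 : ∑ d, ω d = 1)
    (W : Matrix (Fin (2 ^ Nat.clog 2 D)) (Fin (2 ^ Nat.clog 2 D)) ℂ)
    (hWU : W ∈ Matrix.unitaryGroup (Fin (2 ^ Nat.clog 2 D)) ℂ)
    (hW : W.mulVec (Pi.single (0 : Fin (2 ^ Nat.clog 2 D)) 1) = fun k : Fin (2 ^ Nat.clog 2 D) =>
      if hk : (k : ℕ) < D then ((Real.sqrt (ω ⟨k, hk⟩) : ℝ) : ℂ) else 0) :
    lcuU D (Nat.le_pow_clog one_lt_two D) V W ∈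
      Matrix.unitaryGroup (Fin (2 ^ Nat.clog 2 D) × Fin (2 ^ m) × Fin M) ℂ ∧
    (lcuU D (Nat.le_pow_clog one_lt_two D) V W).submatrix
        (fun i : Fin M => ((0 : Fin (2 ^ Nat.clog 2 D)), (0 : Fin (2 ^ m)), i))
        (fun j : Fin M => ((0 : Fin (2 ^ Nat.clog 2 D)), (0 : Fin (2 ^ m)), j))
      = ∑ d, ((ω d : ℂ) • A d) := by

  classical
  set hDK := Nat.le_pow_clog one_lt_two D with hDKdef
  refine ⟨lcuU_mem D hDK V hVU W hWU, ?_⟩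
  have hW0 : ∀ k : Fin (2 ^ Nat.clog 2 D), W k 0 =
      if hk : (k : ℕ) < D then ((Real.sqrt (ω ⟨k, hk⟩) : ℝ) : ℂ) else 0 := by
    intro k
    have h := congrFun hW k
    rw [Matrix.mulVec, dotProduct] at h
    rw [Finset.sum_eq_single (0 : Fin (2 ^ Nat.clog 2 D))] at h
    · simpa using h
    · intro b _ hb; simp [Pi.single_apply, hb]
    · simp
  ext i j
  rw [Matrix.submatrix_apply, lcuU_apply00]
  have hterm : ∀ k : Fin (2 ^ Nat.clog 2 D),
      (starRingEnd ℂ) (W k 0) * W k 0 *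
        (if h : (k : ℕ) < D then V ⟨k, h⟩ ((0 : Fin (2 ^ m)), i) ((0 : Fin (2 ^ m)), j)
          else (1 : Matrix (Fin (2 ^ m) × Fin M) (Fin (2 ^ m) × Fin M) ℂ)
            ((0 : Fin (2 ^ m)), i) ((0 : Fin (2 ^ m)), j))
      = if h : (k : ℕ) < D then ((ω ⟨k, h⟩ : ℝ) : ℂ) * A ⟨k, h⟩ i j else 0 := by
    intro k
    by_cases h : (k : ℕ) < D
    · rw [dif_pos h, dif_pos h, hW0 k, dif_pos h]
      have hA : V ⟨k, h⟩ ((0 : Fin (2 ^ m)), i) ((0 : Fin (2 ^ m)), j) = A ⟨k, h⟩ i j := by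
        have := congrFun (congrFun (hVbe ⟨k, h⟩) i) j
        simpa [Matrix.submatrix_apply] using this
      rw [hA, Complex.conj_ofReal, ← Complex.ofReal_mul, Real.mul_self_sqrt (hω0 _)]
    · rw [dif_neg h, dif_neg h, hW0 k, dif_neg h]
      simp
  rw [Finset.sum_congr rfl fun k _ => hterm k]
  have hemb : ∑ k : Fin (2 ^ Nat.clog 2 D),
      (if h : (k : ℕ) < D then ((ω ⟨k, h⟩ : ℝ) : ℂ) * A ⟨k, h⟩ i j else 0)
      = ∑ d : Fin D, ((ω d : ℝ) : ℂ) * A d i j := by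
    rw [← Finset.sum_subset
      (Finset.subset_univ ((Finset.univ : Finset (Fin D)).map (Fin.castLEEmb hDK)))]
    · rw [Finset.sum_map]
      refine Finset.sum_congr rfl fun d _ => ?_
      have hd : ((Fin.castLEEmb hDK d : Fin (2 ^ Nat.clog 2 D)) : ℕ) < D := by
        simpa using d.isLt
      rw [dif_pos hd]
      have : (⟨((Fin.castLEEmb hDK d : Fin (2 ^ Nat.clog 2 D)) : ℕ), hd⟩ : Fin D) = d := by
        apply Fin.ext; simp
      rw [this]
    · intro k _ hk
      rw [dif_neg]
      intro h
      exact hk (Finset.mem_map.mpr ⟨⟨(k : ℕ), h⟩, Finset.mem_univ _, Fin.ext rfl⟩)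
  rw [hemb, Matrix.sum_apply]
  refine Finset.sum_congr rfl fun d _ => ?_
  simp [Matrix.smul_apply, smul_eq_mul]
end
end

section
/- The unitary U_d satisfies (⟨0|⊗⟨0|⊗⟨0|⊗I_N) U_d (|0⟩⊗|0⟩⊗|0⟩⊗e_{N−1}) = (1/4)(e_{N−2} − 2 e_{N−1}). -/
open Matrix
open scoped Kronecker

noncomputable section

/-- The standard basis vector `e_i` of `ℂ^N`. -/
def eVec (N : ℕ) (i : Fin N) : Fin N → ℂ := Pi.single i 1

/-! ### Auxiliary development -/

/-- basis vector of the full space -/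
def eB (N : ℕ) [NeZero N] (a b c : Fin 2) (j : Fin N) :
    Fin 2 × Fin 2 × Fin 2 × Fin N → ℂ := Pi.single (a, b, c, j) 1

lemma col_eq {N : ℕ} [NeZero N]
    (M : Matrix (Fin 2 × Fin 2 × Fin 2 × Fin N) (Fin 2 × Fin 2 × Fin 2 × Fin N) ℂ)
    (a b c : Fin 2) (j : Fin N) : M *ᵥ eB N a b c j = fun x => M x (a, b, c, j) := by
  rw [eB, Matrix.mulVec_single]; simp; rfl

lemma hs2 : ((1 / Real.sqrt 2 : ℝ) : ℂ) * ((1 / Real.sqrt 2 : ℝ) : ℂ) = 1 / 2 := by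
  norm_cast
  rw [div_mul_div_comm, Real.mul_self_sqrt (by norm_num)]
  norm_num

lemma hsq : ((Real.sqrt 2 : ℝ) : ℂ) ^ 2 = 2 := by
  norm_cast
  exact Real.sq_sqrt (by norm_num)

section Aux

variable {N : ℕ} [NeZero N]

lemma sandwichH_col (L : Fin N) :
    sandwich N Hgate *ᵥ eB N 0 0 0 L
      = (1/2 : ℂ) • (eB N 0 0 0 L + eB N 0 0 1 L + eB N 0 1 0 L + eB N 0 1 1 L) := by
  rw [col_eq]
  funext ⟨a, b, c, j⟩
  fin_cases a <;> fin_cases b <;> fin_cases c <;>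
    simp [sandwich, Hgate, Matrix.kroneckerMap_apply, Matrix.one_apply, eB,
      Pi.single_apply, Prod.ext_iff] <;>
    split_ifs <;> try simp [hs2, hsq]
  all_goals (ring_nf; try simp [hsq, hs2])

lemma sandwichZ_col (b c : Fin 2) (L : Fin N) :
    sandwich N Zgate *ᵥ eB N 0 b c L
      = ((-1 : ℂ) ^ (b.val + c.val)) • eB N 0 b c L := by
  rw [col_eq]
  funext ⟨a, b', c', j⟩
  fin_cases a <;> fin_cases b <;> fin_cases c <;> fin_cases b' <;> fin_cases c' <;>
    simp [sandwich, Zgate, Matrix.kroneckerMap_apply, Matrix.one_apply, eB,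
      Pi.single_apply, Prod.ext_iff]

lemma B00_col (a b c : Fin 2) (L : Fin N) (hL : L ≠ 0) :
    B00 N *ᵥ eB N a b c L = eB N a b c L := by
  rw [col_eq]
  funext ⟨a', b', c', j⟩
  have h0 : ¬ ((0 : Fin N) = L) := fun h => hL h.symm
  fin_cases a <;> fin_cases b <;> fin_cases c <;> fin_cases a' <;> fin_cases b' <;> fin_cases c' <;>
    simp [B00, Fctrl, Xgate, P0, Matrix.kroneckerMap_apply, Matrix.one_apply, eB,
      Matrix.add_apply, Matrix.sub_apply, Matrix.single,
      Pi.single_apply, Prod.ext_iff, h0]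

lemma B11L_col_id (a b c : Fin 2) (L : Fin N) (h : ¬(b = 1 ∧ c = 1 ∧ L = fLast N)) :
    B11L N *ᵥ eB N a b c L = eB N a b c L := by
  rw [col_eq]
  funext ⟨a', b', c', j⟩
  fin_cases a <;> fin_cases b <;> fin_cases c <;> fin_cases a' <;> fin_cases b' <;> fin_cases c' <;>
    simp_all [B11L, Fctrl, Xgate, P1, Matrix.kroneckerMap_apply, Matrix.one_apply, eB,
      Matrix.add_apply, Matrix.sub_apply, Matrix.single,
      Pi.single_apply, Prod.ext_iff] <;>
    (try (split_ifs <;> simp_all)) <;>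
    (rintro rfl h2; exact absurd h2.symm (by simp_all))

lemma B11L_col_flip :
    B11L N *ᵥ eB N 0 1 1 (fLast N) = eB N 1 1 1 (fLast N) := by
  rw [col_eq]
  funext ⟨a', b', c', j⟩
  fin_cases a' <;> fin_cases b' <;> fin_cases c' <;>
    simp [B11L, Fctrl, Xgate, P1, Matrix.kroneckerMap_apply, Matrix.one_apply, eB,
      Matrix.add_apply, Matrix.sub_apply, Matrix.single,
      Pi.single_apply, Prod.ext_iff] <;>
    split_ifs <;> simp_all

lemma Cminus3_col_shift (a c : Fin 2) (L : Fin N) :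
    Cminus3 N *ᵥ eB N a 0 c L = eB N a 0 c (L - 1) := by
  rw [col_eq]
  funext ⟨a', b', c', j⟩
  fin_cases a <;> fin_cases c <;> fin_cases a' <;> fin_cases b' <;> fin_cases c' <;>
    simp [Cminus3, Sm, P0, P1, Matrix.kroneckerMap_apply, Matrix.one_apply, eB,
      Matrix.add_apply, Pi.single_apply, Prod.ext_iff]

lemma Cminus3_col_id (a c : Fin 2) (L : Fin N) :
    Cminus3 N *ᵥ eB N a 1 c L = eB N a 1 c L := by
  rw [col_eq]
  funext ⟨a', b', c', j⟩
  fin_cases a <;> fin_cases c <;> fin_cases a' <;> fin_cases b' <;> fin_cases c' <;>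
    simp [Cminus3, Sm, P0, P1, Matrix.kroneckerMap_apply, Matrix.one_apply, eB,
      Matrix.add_apply, Pi.single_apply, Prod.ext_iff]

lemma Cplus3_col_shift (a b : Fin 2) (L : Fin N) :
    Cplus3 N *ᵥ eB N a b 1 L = eB N a b 1 (L + 1) := by
  rw [col_eq]
  funext ⟨a', b', c', j⟩
  fin_cases a <;> fin_cases b <;> fin_cases a' <;> fin_cases b' <;> fin_cases c' <;>
    simp [Cplus3, Sp, P0, P1, Matrix.kroneckerMap_apply, Matrix.one_apply, eB,
      Matrix.add_apply, Pi.single_apply, Prod.ext_iff]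

lemma Cplus3_col_id (a b : Fin 2) (L : Fin N) :
    Cplus3 N *ᵥ eB N a b 0 L = eB N a b 0 L := by
  rw [col_eq]
  funext ⟨a', b', c', j⟩
  fin_cases a <;> fin_cases b <;> fin_cases a' <;> fin_cases b' <;> fin_cases c' <;>
    simp [Cplus3, Sp, P0, P1, Matrix.kroneckerMap_apply, Matrix.one_apply, eB,
      Matrix.add_apply, Pi.single_apply, Prod.ext_iff]

lemma sandwichH_entry (b c : Fin 2) (i j : Fin N) :
    sandwich N Hgate ((0 : Fin 2), (0 : Fin 2), (0 : Fin 2), i) ((0 : Fin 2), b, c, j)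
      = (1/2 : ℂ) * (if i = j then 1 else 0) := by
  fin_cases b <;> fin_cases c <;>
    simp [sandwich, Hgate, Matrix.kroneckerMap_apply, Matrix.one_apply] <;>
    split_ifs <;> try simp [hs2, hsq]
  all_goals (ring_nf; try simp [hsq, hs2])

lemma sandwichH_entry1 (b c : Fin 2) (i j : Fin N) :
    sandwich N Hgate ((0 : Fin 2), (0 : Fin 2), (0 : Fin 2), i) ((1 : Fin 2), b, c, j) = 0 := by
  simp [sandwich, Matrix.kroneckerMap_apply, Matrix.one_apply]

theorem ud_aux (N : ℕ) [NeZero N] (hN : 2 ≤ N) (L' : Fin N) (hL' : L'.val = N - 2) :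
    (fun i : Fin N =>
        Ud N ((0 : Fin 2), (0 : Fin 2), (0 : Fin 2), i)
          ((0 : Fin 2), (0 : Fin 2), (0 : Fin 2), fLast N))
      = (1 / 4 : ℂ) • (eVec N L' - (2 : ℂ) • eVec N (fLast N)) := by
  set L : Fin N := fLast N with hLdef
  have hLval : L.val = N - 1 := rfl
  have hone : (1 : Fin N).val = 1 := by
    rw [Fin.val_one']; exact Nat.mod_eq_of_lt (by omega)
  have hLne0 : L ≠ 0 := by
    intro h
    have := congrArg Fin.val h
    simp [hLval] at this
    omega
  have hsub : L - 1 = L' := by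
    apply Fin.ext
    rw [Fin.sub_def]
    simp only [hone, hLval, hL']
    have h1 : N - 1 + (N - 1) = N + (N - 2) := by omega
    rw [h1, Nat.add_mod_left, Nat.mod_eq_of_lt (by omega)]
  have hadd : L + 1 = 0 := by
    apply Fin.ext
    rw [Fin.add_def]
    simp only [hone, hLval, Fin.val_zero]
    have h1 : N - 1 + 1 = N := by omega
    rw [h1, Nat.mod_self]
  have hL'add : L' + 1 = L := by
    apply Fin.ext
    rw [Fin.add_def]
    simp only [hone, hLval, hL']
    have h1 : N - 2 + 1 = N - 1 := by omega
    rw [h1, Nat.mod_eq_of_lt (by omega)]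
  have hLL' : L' ≠ L := by
    intro h
    have := congrArg Fin.val h
    rw [hL', hLval] at this
    omega
  have key : Ud N *ᵥ eB N 0 0 0 L
      = (1/2 : ℂ) • (sandwich N Hgate *ᵥ eB N 0 0 0 L')
        - (1/2 : ℂ) • (sandwich N Hgate *ᵥ eB N 0 0 1 L)
        - (1/2 : ℂ) • (sandwich N Hgate *ᵥ eB N 0 1 0 L)
        + (1/2 : ℂ) • (sandwich N Hgate *ᵥ eB N 1 1 1 0) := by
    rw [Ud]
    simp only [← Matrix.mulVec_mulVec]
    rw [sandwichH_col L]
    simp only [Matrix.mulVec_smul, Matrix.mulVec_add]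
    rw [sandwichZ_col 0 0 L, sandwichZ_col 0 1 L, sandwichZ_col 1 0 L, sandwichZ_col 1 1 L]
    simp only [Fin.val_zero, Fin.val_one, pow_zero, pow_one, Nat.add_zero, Nat.zero_add,
      neg_one_sq, one_smul, Matrix.mulVec_smul, Matrix.mulVec_add]
    rw [B00_col 0 0 0 L hLne0, B00_col 0 0 1 L hLne0, B00_col 0 1 0 L hLne0,
      B00_col 0 1 1 L hLne0]
    rw [B11L_col_id 0 0 0 L (by simp), B11L_col_id 0 0 1 L (by simp),
      B11L_col_id 0 1 0 L (by simp), B11L_col_flip]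
    rw [Cminus3_col_shift 0 0 L, Cminus3_col_shift 0 1 L, Cminus3_col_id 0 0 L,
      Cminus3_col_id 1 1 L, hsub]
    rw [Cplus3_col_id 0 0 L', Cplus3_col_shift 0 0 L', Cplus3_col_id 0 1 L,
      Cplus3_col_shift 1 1 L, hL'add, hadd]
    try simp only [Matrix.mulVec_smul]
    module
  funext i
  have hcol := congrFun (col_eq (Ud N) 0 0 0 L) ((0 : Fin 2), (0 : Fin 2), (0 : Fin 2), i)
  rw [← hcol, key]
  simp only [col_eq, Pi.smul_apply, Pi.add_apply, Pi.sub_apply, smul_eq_mul]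
  rw [sandwichH_entry 0 0 i L', sandwichH_entry 0 1 i L, sandwichH_entry 1 0 i L,
    sandwichH_entry1 1 1 i 0]
  simp only [eVec, Pi.smul_apply, Pi.sub_apply, Pi.single_apply, smul_eq_mul]
  by_cases h1 : i = L' <;> by_cases h2 : i = L <;>
    simp_all <;> ring
end Aux

/-- `(⟨0|⊗⟨0|⊗⟨0|⊗I) U_d (|0⟩⊗|0⟩⊗|0⟩⊗e_{N−1}) = (1/4)(e_{N−2} − 2e_{N−1})`. -/
theorem ud_right_boundary_action (n : ℕ) (hn : 1 ≤ n) :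
    (fun i : Fin (2 ^ n) =>
        Ud (2 ^ n) ((0 : Fin 2), (0 : Fin 2), (0 : Fin 2), i)
          ((0 : Fin 2), (0 : Fin 2), (0 : Fin 2), fLast (2 ^ n)))
      = (1 / 4 : ℂ) •
          (eVec (2 ^ n)
              ⟨2 ^ n - 2, (by have := Nat.one_lt_two_pow_iff.mpr (by omega : n ≠ 0); omega)⟩
            - (2 : ℂ) • eVec (2 ^ n) (fLast (2 ^ n))) := by
  have hN : 2 ≤ 2 ^ n := by
    have := Nat.one_lt_two_pow_iff.mpr (by omega : n ≠ 0); omega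
  exact ud_aux (2 ^ n) hN _ rfl
end
end
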